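/- Let k ≥ 1 and X ∈ 𝒳^{4k}_{η} with eigenvalues λ, and let M = (M_n) be a sequence with min_{1≤j≤M_n} λ_j ≥ 2/n for all n ≥ 1. Then there exists a numerical constant C_k > 0 depending only on k such that for all n ≥ 1: P( there exists j ∈ {1,…,M_n} with |λ_j/λ̂_j − 1| > 1/2 or λ̂_j < 1/n ) ≤ C_k·η·M_n·n^{−k}, where λ̂_j := n⁻¹Σ_{i=1}^n [Xᵢ]_j². -/

import Mathlib

open Filter Real

noncomputable section

namespace CircularFLM

/-- A circular functional linear model, described through the Fourier coefficients of the
regressor with respect to the trigonometric basis of `L²[0,1]` (indices `j ≥ 1`), together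
with an infinite i.i.d. sequence of copies `(ε_i, X_i)` generating the sample
`(Y_i, X_i)` with `Y_i = ⟨β, X_i⟩ + σ ε_i`.  `Xc i j ω` is the `j`-th Fourier coefficient
`[X_i]_j` of the `i`-th copy of the regressor. -/
structure Model where
  Ω : Type
  [mΩ : MeasurableSpace Ω]
  P : MeasureTheory.Measure Ω
  [probP : MeasureTheory.IsProbabilityMeasure P]
  σ : ℝ
  σ_pos : 0 < σ
  /-- the eigenvalues `λ_j = E [X]_j²`, `j ≥ 1`, of the covariance operator -/
  lam : ℕ → ℝ
  lam_pos : ∀ j, 1 ≤ j → 0 < lam j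
  lam_tendsto_zero : Tendsto lam atTop (nhds (0 : ℝ))
  Xc : ℕ → ℕ → Ω → ℝ
  meas_Xc : ∀ i j, Measurable (Xc i j)
  eps : ℕ → Ω → ℝ
  meas_eps : ∀ i, Measurable (eps i)
  /-- `X` is centered -/
  Xc_centered : ∀ j, 1 ≤ j → ∫ ω, Xc 0 j ω ∂P = 0
  /-- second-order stationarity: the Fourier coefficients have variances `λ_j` ... -/
  Xc_var : ∀ j, 1 ≤ j → ∫ ω, (Xc 0 j ω) ^ 2 ∂P = lam j
  /-- ... and are uncorrelated -/
  Xc_uncorr : ∀ j k, 1 ≤ j → 1 ≤ k → j ≠ k → ∫ ω, Xc 0 j ω * Xc 0 k ω ∂P = 0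
  /-- `E‖X‖² < ∞` -/
  X_sq_int : MeasureTheory.Integrable (fun ω => ∑' j : ℕ, (Xc 0 (j + 1) ω) ^ 2) P
  /-- the error is centered with variance one ... -/
  eps_centered : ∫ ω, eps 0 ω ∂P = 0
  eps_var : ∫ ω, (eps 0 ω) ^ 2 ∂P = 1
  /-- ... and uncorrelated with the regressor -/
  eps_uncorr : ∀ j, 1 ≤ j → ∫ ω, eps 0 ω * Xc 0 j ω ∂P = 0
  /-- the copies `(ε_i, X_i)` are independent ... -/
  iid_indep : ProbabilityTheory.iIndepFun
    (fun i ω => ((eps i ω : ℝ), fun j => Xc i j ω)) P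
  /-- ... and identically distributed -/
  iid_ident : ∀ i : ℕ,
    MeasureTheory.Measure.map (fun ω => ((eps i ω : ℝ), fun j => Xc i j ω)) P
      = MeasureTheory.Measure.map (fun ω => ((eps 0 ω : ℝ), fun j => Xc 0 j ω)) P

open MeasureTheory ProbabilityTheory

attribute [instance] Model.mΩ Model.probP

/-- the response `Y_i = ⟨β, X_i⟩ + σ ε_i` for slope Fourier coefficients `b` -/
def Model.Y (M : Model) (b : ℕ → ℝ) (i : ℕ) (ω : M.Ω) : ℝ :=
  (∑' j : ℕ, b (j + 1) * M.Xc i (j + 1) ω) + M.σ * M.eps i ω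

/-- `σ_Y² = Var(Y)` -/
def Model.varY (M : Model) (b : ℕ → ℝ) : ℝ := variance (M.Y b 0) M.P

/-- `E‖X‖²` -/
def Model.EX2 (M : Model) : ℝ := ∫ ω, ∑' j : ℕ, (M.Xc 0 (j + 1) ω) ^ 2 ∂M.P

/-- `X ∈ 𝒳ᵏ_η`, i.e. `sup_j E|[X]_j/√λ_j|ᵏ ≤ η` -/
def Model.momX (M : Model) (k : ℕ) (η : ℝ) : Prop :=
  ∀ j, 1 ≤ j → Integrable (fun ω => |M.Xc 0 j ω / Real.sqrt (M.lam j)| ^ k) M.P ∧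
    ∫ ω, |M.Xc 0 j ω / Real.sqrt (M.lam j)| ^ k ∂M.P ≤ η

/-- `E|Y/σ_Y|ᵏ ≤ η` -/
def Model.momY (M : Model) (b : ℕ → ℝ) (k : ℕ) (η : ℝ) : Prop :=
  Integrable (fun ω => |M.Y b 0 ω / Real.sqrt (M.varY b)| ^ k) M.P ∧
    ∫ ω, |M.Y b 0 ω / Real.sqrt (M.varY b)| ^ k ∂M.P ≤ η

/-- the series `⟨β, X_i⟩ = Σ_j [β]_j [X_i]_j` converges almost surely -/
def Model.innerSummable (M : Model) (b : ℕ → ℝ) : Prop :=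
  ∀ i, ∀ᵐ ω ∂M.P, Summable (fun j : ℕ => b (j + 1) * M.Xc i (j + 1) ω)

/-- `[ĝ]_j = n⁻¹ Σ_i Y_i [X_i]_j` -/
def Model.ghat (M : Model) (b : ℕ → ℝ) (n j : ℕ) (ω : M.Ω) : ℝ :=
  (n : ℝ)⁻¹ * ∑ i ∈ Finset.range n, M.Y b i ω * M.Xc i j ω

/-- `λ̂_j = n⁻¹ Σ_i [X_i]_j²` -/
def Model.lamhat (M : Model) (n j : ℕ) (ω : M.Ω) : ℝ :=
  (n : ℝ)⁻¹ * ∑ i ∈ Finset.range n, (M.Xc i j ω) ^ 2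

/-- the `j`-th coefficient of `Φ̂_ĝ`, i.e. `([ĝ]_j/λ̂_j)·1{λ̂_j ≥ 1/n}` -/
def Model.phiGhat (M : Model) (b : ℕ → ℝ) (n j : ℕ) (ω : M.Ω) : ℝ :=
  if 1 / (n : ℝ) ≤ M.lamhat n j ω then M.ghat b n j ω / M.lamhat n j ω else 0

/-- the `j`-th coefficient of the orthogonal series estimator `β̂_m` -/
def Model.bhat (M : Model) (b : ℕ → ℝ) (n m j : ℕ) (ω : M.Ω) : ℝ :=
  if 1 ≤ j ∧ j ≤ m then M.phiGhat b n j ω else 0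

/-- the contrast `Υ(t) = ‖t‖²_ω − 2⟨t, Φ̂_ĝ⟩_ω` of a coefficient sequence `t` -/
def Model.contrast (M : Model) (w b : ℕ → ℝ) (n : ℕ) (t : ℕ → ℝ) (ω : M.Ω) : ℝ :=
  (∑' j : ℕ, w (j + 1) * t (j + 1) ^ 2)
    - 2 * ∑' j : ℕ, w (j + 1) * t (j + 1) * M.phiGhat b n (j + 1) ω

/-- the penalty `pen(m) = 192 σ_Y² η δ_m / n` -/
def Model.pen (M : Model) (b : ℕ → ℝ) (η : ℝ) (δ : ℕ → ℝ) (n m : ℕ) : ℝ :=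
  192 * M.varY b * η * δ m / n

/-- the `𝓕_ω`-risk `E‖β̂_{m̂} − β‖²_ω` of the estimator with (data-driven) dimension `mhat` -/
def Model.risk (M : Model) (w b : ℕ → ℝ) (n : ℕ) (mhat : M.Ω → ℕ) : ℝ :=
  ∫ ω, ∑' j : ℕ, w (j + 1) * (M.bhat b n (mhat ω) (j + 1) ω - b (j + 1)) ^ 2 ∂M.P

/-- `β ∈ 𝓕ʳ_γ`, the ellipsoid `‖β‖²_γ ≤ r` -/
def inEllipsoid (γ : ℕ → ℝ) (r : ℝ) (b : ℕ → ℝ) : Prop :=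
  Summable (fun j : ℕ => γ (j + 1) * b (j + 1) ^ 2) ∧
    ∑' j : ℕ, γ (j + 1) * b (j + 1) ^ 2 ≤ r

/-- Assumption 1 on the weight sequences `ω` (here `w`) and `γ` -/
def Assumption1 (w γ : ℕ → ℝ) : Prop :=
  (∀ j, 1 ≤ j → 0 < w j) ∧ (∀ j, 1 ≤ j → 0 < γ j) ∧ w 1 = 1 ∧ γ 1 = 1 ∧
    (∀ j k, 1 ≤ j → j ≤ k → (γ k)⁻¹ ≤ (γ j)⁻¹) ∧
    Tendsto (fun j => (γ j)⁻¹) atTop (nhds (0 : ℝ)) ∧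
    (∀ j k, 1 ≤ j → j ≤ k → w k / γ k ≤ w j / γ j) ∧
    Tendsto (fun j => w j / γ j) atTop (nhds (0 : ℝ))

/-- `M_n = argmax{1 ≤ M ≤ n : δ_M ≤ δ_1 n min(ω_M, 1)}` -/
def Mseq (w δ : ℕ → ℝ) (n : ℕ) : ℕ :=
  sSup {M : ℕ | 1 ≤ M ∧ M ≤ n ∧ δ M ≤ δ 1 * n * min (w M) 1}

/-- `N_n = argmax{1 ≤ N ≤ n : max_{1≤j≤N} ω_j ≤ n}` -/
def Nseq (w : ℕ → ℝ) (n : ℕ) : ℕ :=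
  sSup {N : ℕ | 1 ≤ N ∧ N ≤ n ∧ ∀ j, 1 ≤ j → j ≤ N → w j ≤ n}

/-- Assumption 2 on the sequences `δ`, `Δ` and `M = (M_n)` (relative to `λ` and `ω`) -/
def Assumption2 (lam w δ Δ : ℕ → ℝ) (Sig : ℝ) : Prop :=
  (∀ j k, 1 ≤ j → j ≤ k → δ j ≤ δ k) ∧ (∀ j k, 1 ≤ j → j ≤ k → Δ j ≤ Δ k) ∧
    (∀ m, 1 ≤ m → ∑ j ∈ Finset.Icc 1 m, w j / lam j ≤ δ m) ∧
    (∀ m, 1 ≤ m → ∀ j, 1 ≤ j → j ≤ m → w j / lam j ≤ Δ m) ∧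
    Summable (fun m : ℕ => Δ (m + 1) * Real.exp (-δ (m + 1) / (6 * Δ (m + 1)))) ∧
    (∑' m : ℕ, Δ (m + 1) * Real.exp (-δ (m + 1) / (6 * Δ (m + 1)))) ≤ Sig ∧
    (∀ n : ℕ, 1 ≤ n → ∀ j, 1 ≤ j → j ≤ Mseq w δ n → 2 / (n : ℝ) ≤ lam j)

/-- `m̂` is a minimizer of the penalized contrast over `{1, …, Mn}` -/
def Model.IsSelection (M : Model) (w b δ : ℕ → ℝ) (η : ℝ) (n Mn : ℕ)
    (mhat : M.Ω → ℕ) : Prop :=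
  Measurable mhat ∧ ∀ ω, (1 ≤ mhat ω ∧ mhat ω ≤ Mn) ∧
    ∀ m, 1 ≤ m → m ≤ Mn →
      M.contrast w b n (fun j => M.bhat b n (mhat ω) j ω) ω + M.pen b η δ n (mhat ω)
        ≤ M.contrast w b n (fun j => M.bhat b n m j ω) ω + M.pen b η δ n m

/-- `max_{1 ≤ j ≤ m} f j` -/
def maxIcc (f : ℕ → ℝ) (m : ℕ) : ℝ := sSup (f '' Set.Icc 1 m)

/-- the intrinsic choice `Δ_m = max_{1≤j≤m} ω_j/λ_j` -/
def intrinsicDelta (lam w : ℕ → ℝ) (m : ℕ) : ℝ := maxIcc (fun j => w j / lam j) m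

/-- the intrinsic `κ_m = max_{1≤j≤m} max(ω_j,1)/λ_j` -/
def intrinsicKappa (lam w : ℕ → ℝ) (m : ℕ) : ℝ := maxIcc (fun j => max (w j) 1 / lam j) m

/-- the intrinsic choice `δ_m = m Δ_m log(κ_m ∨ (m+2)) / log(m+2)` -/
def intrinsicdelta (lam w : ℕ → ℝ) (m : ℕ) : ℝ :=
  (m : ℝ) * intrinsicDelta lam w m
    * (Real.log (max (intrinsicKappa lam w m) ((m : ℝ) + 2)) / Real.log ((m : ℝ) + 2))

/-- the estimated `Δ̂_m` -/
def Model.Deltahat (M : Model) (w : ℕ → ℝ) (n m : ℕ) (ω : M.Ω) : ℝ :=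
  maxIcc (fun j => if 1 / (n : ℝ) ≤ M.lamhat n j ω then w j / M.lamhat n j ω else 0) m

/-- the estimated `κ̂_m` -/
def Model.kappahat (M : Model) (w : ℕ → ℝ) (n m : ℕ) (ω : M.Ω) : ℝ :=
  maxIcc (fun j => if 1 / (n : ℝ) ≤ M.lamhat n j ω then max (w j) 1 / M.lamhat n j ω else 0) m

/-- the estimated `δ̂_m` -/
def Model.deltahat (M : Model) (w : ℕ → ℝ) (n m : ℕ) (ω : M.Ω) : ℝ :=
  (m : ℝ) * M.Deltahat w n m ω
    * (Real.log (max (M.kappahat w n m ω) ((m : ℝ) + 2)) / Real.log ((m : ℝ) + 2))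

/-- the random penalty `p̂en(m) = 1920 σ_Y² η δ̂_m / n` -/
def Model.penhat (M : Model) (w b : ℕ → ℝ) (η : ℝ) (n m : ℕ) (ω : M.Ω) : ℝ :=
  1920 * M.varY b * η * M.deltahat w n m ω / n

/-- the random upper bound `M̂_n = argmax{1 ≤ M ≤ N_n : λ̂_M/(M max(ω_M,1)) ≥ (log n)/n}` -/
def Model.MhatSeq (M : Model) (w : ℕ → ℝ) (n : ℕ) (ω : M.Ω) : ℕ :=
  sSup {Mm : ℕ | 1 ≤ Mm ∧ Mm ≤ Nseq w n ∧
    Real.log n / n ≤ M.lamhat n Mm ω / (Mm * max (w Mm) 1)}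

/-- `m̂` is a minimizer of the fully data-driven penalized contrast over `{1, …, M̂_n}` -/
def Model.IsSelectionRand (M : Model) (w b : ℕ → ℝ) (η : ℝ) (n : ℕ)
    (mhat : M.Ω → ℕ) : Prop :=
  Measurable mhat ∧ ∀ ω, (1 ≤ mhat ω ∧ mhat ω ≤ M.MhatSeq w n ω) ∧
    ∀ m, 1 ≤ m → m ≤ M.MhatSeq w n ω →
      M.contrast w b n (fun j => M.bhat b n (mhat ω) j ω) ω + M.penhat w b η n (mhat ω) ω
        ≤ M.contrast w b n (fun j => M.bhat b n m j ω) ω + M.penhat w b η n m ω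

/-- Assumption 3 on `M = (M_n)`, `m† = (m†_n)` and `N = (N_n)` for the intrinsic sequences -/
def Assumption3 (lam w γ : ℕ → ℝ) (mdag : ℕ → ℕ) (ς : ℝ) : Prop :=
  (∀ n : ℕ, 1 ≤ n → ∀ j, 1 ≤ j → j ≤ Mseq w (intrinsicdelta lam w) n → 2 / (n : ℝ) ≤ lam j) ∧
    (∀ n : ℕ, 1 ≤ n → ∀ m : ℕ, Mseq w (intrinsicdelta lam w) n < m →
      lam m / (m * max (w m) 1) ≤ Real.log n / (2 * n)) ∧
    1 ≤ ς ∧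
    (∀ n : ℕ, 1 ≤ n → 1 ≤ mdag n ∧
      ς⁻¹ ≤ γ (mdag n) * intrinsicdelta lam w (mdag n) / (n * w (mdag n)) ∧
      γ (mdag n) * intrinsicdelta lam w (mdag n) / (n * w (mdag n)) ≤ ς) ∧
    (∀ n : ℕ, 1 ≤ n → ∀ m, 1 ≤ m → m ≤ mdag n →
      2 * Real.log n / n ≤ lam m / (m * max (w m) 1)) ∧
    (∀ n : ℕ, 1 ≤ n → Mseq w (intrinsicdelta lam w) n ≤ Nseq w n ∧ Nseq w n ≤ n)

/-- `sup_{t ∈ B_m} |⟨t, v⟩_ω|²` where `v` is (the coefficient sequence of) a function and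
`B_m` is the unit ball of `span(φ_1,…,φ_m)` w.r.t. `‖·‖_ω`  -/
def ballSup (w : ℕ → ℝ) (m : ℕ) (v : ℕ → ℝ) : ℝ :=
  sSup {x : ℝ | ∃ c : ℕ → ℝ, (∑ j ∈ Finset.Icc 1 m, w j * c j ^ 2) ≤ 1 ∧
    x = |∑ j ∈ Finset.Icc 1 m, w j * c j * v j| ^ 2}

/-- the event `Ω_{Y_i, X_i}` -/
def Model.goodEvent (M : Model) (b w δ : ℕ → ℝ) (n i : ℕ) : Set M.Ω :=
  {ω | |M.Y b i ω / Real.sqrt (M.varY b)| ≤ (n : ℝ) ^ ((1 : ℝ) / 6) ∧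
    ∀ j, 1 ≤ j → j ≤ Mseq w δ n → |M.Xc i j ω / Real.sqrt (M.lam j)| ≤ (n : ℝ) ^ ((1 : ℝ) / 6)}

/-- the Fourier coefficients `[ĥ]_j` -/
def Model.hhat (M : Model) (b w δ : ℕ → ℝ) (n j : ℕ) (ω : M.Ω) : ℝ :=
  (n : ℝ)⁻¹ * ∑ i ∈ Finset.range n,
    ((M.goodEvent b w δ n i).indicator (fun ω' => M.Y b i ω' * M.Xc i j ω') ω
      - ∫ ω', (M.goodEvent b w δ n i).indicator (fun ω' => M.Y b i ω' * M.Xc i j ω') ω' ∂M.P)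

/-- the Fourier coefficients `[f̂]_j` -/
def Model.fhat (M : Model) (b w δ : ℕ → ℝ) (n j : ℕ) (ω : M.Ω) : ℝ :=
  (n : ℝ)⁻¹ * ∑ i ∈ Finset.range n,
    ((M.goodEvent b w δ n i)ᶜ.indicator (fun ω' => M.Y b i ω' * M.Xc i j ω') ω
      - ∫ ω', (M.goodEvent b w δ n i)ᶜ.indicator (fun ω' => M.Y b i ω' * M.Xc i j ω') ω' ∂M.P)

section Aux

variable {Ω : Type*} [MeasurableSpace Ω] {P : MeasureTheory.Measure Ω}

lemma abs_pow_even (x : ℝ) (k : ℕ) : |x| ^ (2 * k) = x ^ (2 * k) := by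
  rw [pow_mul, pow_mul, sq_abs]

lemma abs_integral_le (f : Ω → ℝ) : |∫ ω, f ω ∂P| ≤ ∫ ω, |f ω| ∂P := by
  simpa [Real.norm_eq_abs] using norm_integral_le_integral_norm (μ := P) f

lemma pow_le_one_add_pow {x : ℝ} (hx : 0 ≤ x) {a b : ℕ} (hab : a ≤ b) :
    x ^ a ≤ 1 + x ^ b := by
  rcases le_total x 1 with h | h
  · have h1 : x ^ a ≤ 1 := pow_le_one₀ hx h
    have h2 : (0:ℝ) ≤ x ^ b := pow_nonneg hx b
    linarith
  · have h1 : x ^ a ≤ x ^ b := pow_le_pow_right₀ h hab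
    have h2 : (0:ℝ) ≤ x ^ a := pow_nonneg hx a
    linarith

lemma add_pow_le2 {a b : ℝ} (ha : 0 ≤ a) (hb : 0 ≤ b) (n : ℕ) :
    (a + b) ^ n ≤ 2 ^ n * (a ^ n + b ^ n) := by
  have h1 : a + b ≤ 2 * max a b := by
    rcases le_total a b with h | h
    · rw [max_eq_right h]; linarith
    · rw [max_eq_left h]; linarith
  have h2 : (a + b) ^ n ≤ (2 * max a b) ^ n :=
    pow_le_pow_left₀ (by linarith) h1 n
  rw [mul_pow] at h2
  refine h2.trans ?_
  have h3 : max a b ^ n ≤ a ^ n + b ^ n := by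
    rcases le_total a b with h | h
    · rw [max_eq_right h]
      have := pow_nonneg ha n; linarith
    · rw [max_eq_left h]
      have := pow_nonneg hb n; linarith
  have h4 : (0:ℝ) ≤ (2:ℝ) ^ n := by positivity
  exact mul_le_mul_of_nonneg_left h3 h4

lemma integrable_abs_pow_of_le [MeasureTheory.IsFiniteMeasure P]
    {f : Ω → ℝ} (hf : Measurable f) {a b : ℕ} (hab : a ≤ b)
    (hint : Integrable (fun ω => |f ω| ^ b) P) :
    Integrable (fun ω => |f ω| ^ a) P := by
  refine Integrable.mono' ((integrable_const 1).add hint)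
    ((hf.abs.pow_const a)).aestronglyMeasurable ?_
  filter_upwards with ω
  rw [Real.norm_eq_abs, abs_of_nonneg (by positivity)]
  exact pow_le_one_add_pow (abs_nonneg _) hab

lemma lyapunov [MeasureTheory.IsProbabilityMeasure P] {f : Ω → ℝ} (hf : Measurable f)
    {b : ℕ} (hb : 1 ≤ b) (hint : Integrable (fun ω => |f ω| ^ b) P)
    {A : ℝ} (hA : 0 ≤ A) (hle : ∫ ω, |f ω| ^ b ∂P ≤ A ^ b) :
    ∀ a, a ≤ b → ∫ ω, |f ω| ^ a ∂P ≤ A ^ a := by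
  intro a hab
  rcases Nat.eq_zero_or_pos a with rfl | ha
  · simp
  have hbne : ((b:ℝ)) ≠ 0 := by positivity
  set J := ∫ ω, |f ω| ^ b ∂P with hJ
  have hJ0 : 0 ≤ J := integral_nonneg fun ω => by positivity
  rcases eq_or_lt_of_le hJ0 with hJz | hJpos
  · have hzero : (fun ω => |f ω| ^ b) =ᵐ[P] 0 :=
      (integral_eq_zero_iff_of_nonneg (fun ω => by positivity) hint).mp hJz.symm
    have hzero' : (fun ω => |f ω| ^ a) =ᵐ[P] 0 := by
      filter_upwards [hzero] with ω hω
      have hfω : |f ω| = 0 := by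
        have := pow_eq_zero_iff (n := b) (by omega) |>.mp hω
        exact this
      simp [hfω, zero_pow (by omega : a ≠ 0)]
    have hz2 : ∫ ω, |f ω| ^ a ∂P = 0 := by
      rw [integral_congr_ae hzero']; simp
    rw [hz2]; positivity
  · set θ : ℝ := (a : ℝ) / b with hθ
    have hθ0 : 0 < θ := div_pos (by exact_mod_cast ha) (by positivity)
    have hθ1 : θ ≤ 1 := by
      rw [hθ, div_le_one (by positivity)]
      exact_mod_cast hab
    have hJne : J ≠ 0 := ne_of_gt hJpos
    have hkey : ∀ ω, |f ω| ^ a ≤ (θ * J ^ θ / J) * |f ω| ^ b + (1 - θ) * J ^ θ := by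
      intro ω
      have hx : (0:ℝ) ≤ |f ω| ^ b := by positivity
      have h1 : (|f ω| ^ a : ℝ) = (|f ω| ^ b) ^ θ := by
        rw [← Real.rpow_natCast (|f ω|) b, ← Real.rpow_mul (abs_nonneg _),
            ← Real.rpow_natCast (|f ω|) a]
        congr 1
        rw [hθ]; field_simp
      have h2 : ((|f ω| ^ b) / J) ^ θ * (1:ℝ) ^ (1 - θ) ≤ θ * (|f ω| ^ b / J) + (1 - θ) * 1 :=
        Real.geom_mean_le_arith_mean2_weighted hθ0.le (by linarith) (by positivity)
          zero_le_one (by ring)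
      rw [Real.one_rpow, mul_one, mul_one] at h2
      have h3 : (|f ω| ^ b / J) ^ θ = (|f ω| ^ b) ^ θ / J ^ θ := Real.div_rpow hx hJ0 θ
      have hJθ : (0:ℝ) ≤ J ^ θ := Real.rpow_nonneg hJ0 _
      calc |f ω| ^ a = (|f ω| ^ b) ^ θ := h1
        _ = (|f ω| ^ b / J) ^ θ * J ^ θ := by
            rw [h3, div_mul_cancel₀]
            exact ne_of_gt (Real.rpow_pos_of_pos hJpos _)
        _ ≤ (θ * (|f ω| ^ b / J) + (1 - θ)) * J ^ θ := mul_le_mul_of_nonneg_right h2 hJθ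
        _ = (θ * J ^ θ / J) * |f ω| ^ b + (1 - θ) * J ^ θ := by
            field_simp
    have hrhs : Integrable (fun ω => (θ * J ^ θ / J) * |f ω| ^ b + (1 - θ) * J ^ θ) P :=
      (hint.const_mul _).add (integrable_const _)
    have hinta : Integrable (fun ω => |f ω| ^ a) P := integrable_abs_pow_of_le hf hab hint
    have hmono := integral_mono hinta hrhs (fun ω => hkey ω)
    rw [integral_add (hint.const_mul _) (integrable_const _), integral_const_mul,
        integral_const, probReal_univ, smul_eq_mul, one_mul, ← hJ] at hmono
    have heq : θ * J ^ θ / J * J + (1 - θ) * J ^ θ = J ^ θ := by field_simp; ring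
    rw [heq] at hmono
    refine hmono.trans ?_
    calc J ^ θ ≤ (A ^ b) ^ θ := Real.rpow_le_rpow hJ0 hle hθ0.le
      _ = A ^ a := by
        rw [← Real.rpow_natCast A b, ← Real.rpow_mul hA, ← Real.rpow_natCast A a]
        congr 1
        rw [hθ]; field_simp

lemma moment_bound [MeasureTheory.IsProbabilityMeasure P] {k : ℕ} (hk : 1 ≤ k) {β : ℝ}
    (hβ : 1 ≤ β) {W : ℕ → Ω → ℝ} (hmeas : ∀ i, Measurable (W i))
    (hindep : iIndepFun W P)
    (hint : ∀ i a, a ≤ 2 * k → Integrable (fun ω => (W i ω) ^ a) P)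
    (hmom : ∀ i a, a ≤ 2 * k → ∫ ω, |W i ω| ^ a ∂P ≤ β ^ a)
    (hcent : ∀ i, ∫ ω, W i ω ∂P = 0) (n : ℕ) :
    (∀ r, r ≤ 2 * k → Integrable (fun ω => (∑ i ∈ Finset.range n, W i ω) ^ r) P) ∧
      (∀ m, m ≤ k → ∫ ω, (∑ i ∈ Finset.range n, W i ω) ^ (2 * m) ∂P
        ≤ (4 ^ k * β ^ 2 * (n : ℝ)) ^ m) := by
  induction n with
  | zero =>
      constructor
      · intro r hr
        simp only [Finset.range_zero, Finset.sum_empty]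
        exact integrable_const _
      · intro m hm
        simp only [Finset.range_zero, Finset.sum_empty, Nat.cast_zero, mul_zero]
        rcases Nat.eq_zero_or_pos m with rfl | hm'
        · simp
        · rw [zero_pow (by omega : 2 * m ≠ 0), zero_pow (by omega : m ≠ 0)]
          simp
  | succ n IH =>
      set S : Ω → ℝ := fun ω => ∑ i ∈ Finset.range n, W i ω with hS
      have hSmeas : Measurable S := Finset.measurable_sum _ fun i _ => hmeas i
      have hSfun : S = ∑ j ∈ Finset.range n, W j := by
        funext ω; rw [Finset.sum_apply]
      have hSW : IndepFun S (W n) P := by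
        rw [hSfun]
        exact hindep.indepFun_finsetSum_of_notMem hmeas Finset.notMem_range_self
      have hSWpow : ∀ p q : ℕ, IndepFun (fun ω => S ω ^ p) (fun ω => W n ω ^ q) P :=
        fun p q => hSW.comp (measurable_id.pow_const p) (measurable_id.pow_const q)
      have hprod : ∀ p q : ℕ, p ≤ 2 * k → q ≤ 2 * k →
          Integrable (fun ω => S ω ^ p * W n ω ^ q) P := fun p q hp hq =>
        (hSWpow p q).integrable_mul (IH.1 p hp) (hint n q hq)
      have hrew : ∀ r : ℕ, (fun ω => (∑ i ∈ Finset.range (n+1), W i ω) ^ r)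
          = fun ω => ∑ j ∈ Finset.range (r+1),
              S ω ^ j * W n ω ^ (r - j) * ((r.choose j : ℕ) : ℝ) := by
        intro r
        funext ω
        rw [Finset.sum_range_succ, add_pow]
      have hint' : ∀ r, r ≤ 2 * k →
          Integrable (fun ω => (∑ i ∈ Finset.range (n+1), W i ω) ^ r) P := by
        intro r hr
        rw [hrew r]
        refine integrable_finset_sum _ fun j hj => ?_
        have hj' := Finset.mem_range.mp hj
        exact (hprod j (r - j) (by omega) (by omega)).mul_const _
      refine ⟨hint', ?_⟩
      intro m hm
      rcases Nat.eq_zero_or_pos m with rfl | hm'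
      · simp
      -- expand the integral
      have hexp : ∫ ω, (∑ i ∈ Finset.range (n+1), W i ω) ^ (2 * m) ∂P
          = ∑ j ∈ Finset.range (2 * m + 1),
              (∫ ω, S ω ^ j ∂P) * (∫ ω, W n ω ^ (2 * m - j) ∂P)
                * (((2 * m).choose j : ℕ) : ℝ) := by
        rw [hrew (2 * m),
          integral_finset_sum _ (fun j hj =>
            (hprod j (2 * m - j) (by have := Finset.mem_range.mp hj; omega)
              (by omega)).mul_const _)]
        refine Finset.sum_congr rfl fun j hj => ?_
        rw [integral_mul_const]
        congr 1
        exact (hSWpow j (2 * m - j)).integral_fun_mul_eq_mul_integral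
          (hSmeas.pow_const j).aestronglyMeasurable
          ((hmeas n).pow_const _).aestronglyMeasurable
      obtain ⟨m', rfl⟩ : ∃ m', m = m' + 1 := ⟨m - 1, by omega⟩
      have h2m : 2 * (m' + 1) = (2 * m' + 1) + 1 := by ring
      rw [hexp]
      -- last two terms
      rw [show 2 * (m' + 1) + 1 = (2 * m' + 1) + 1 + 1 by ring,
        Finset.sum_range_succ, Finset.sum_range_succ]
      have hlast : (∫ ω, S ω ^ ((2 * m' + 1) + 1) ∂P)
          * (∫ ω, W n ω ^ (2 * (m' + 1) - ((2 * m' + 1) + 1)) ∂P)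
          * (((2 * (m' + 1)).choose ((2 * m' + 1) + 1) : ℕ) : ℝ)
          = ∫ ω, S ω ^ (2 * (m' + 1)) ∂P := by
        rw [show 2 * (m' + 1) - ((2 * m' + 1) + 1) = 0 by omega,
            show ((2 * m' + 1) + 1) = 2 * (m' + 1) by ring]
        simp
      have hpen : (∫ ω, S ω ^ (2 * m' + 1) ∂P)
          * (∫ ω, W n ω ^ (2 * (m' + 1) - (2 * m' + 1)) ∂P)
          * (((2 * (m' + 1)).choose (2 * m' + 1) : ℕ) : ℝ) = 0 := by
        rw [show 2 * (m' + 1) - (2 * m' + 1) = 1 by omega]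
        simp only [pow_one, hcent n]
        ring
      rw [hlast, hpen, add_zero]
      set m := m' + 1 with hmdef
      have hq : ∀ j, j ≤ 2 * m' → 2 * m - j ≤ 2 * k := by omega
      rcases Nat.eq_zero_or_pos n with rfl | hn
      · -- n = 0 : S ≡ 0
        have hS0 : S = fun _ => (0:ℝ) := by funext ω; simp [hS]
        have hsum0 : ∑ j ∈ Finset.range (2 * m' + 1),
            (∫ ω, S ω ^ j ∂P) * (∫ ω, W 0 ω ^ (2 * m - j) ∂P)
              * (((2 * m).choose j : ℕ) : ℝ)
            = ∫ ω, W 0 ω ^ (2 * m) ∂P := by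
          rw [Finset.sum_eq_single 0]
          · simp [hS0]
          · intro j hj hj0
            rw [hS0]
            simp [zero_pow hj0]
          · intro h
            exact absurd (Finset.mem_range.mpr (by omega)) h
        have hSlast : ∫ ω, S ω ^ (2 * m) ∂P = 0 := by
          rw [hS0]
          simp [zero_pow (by omega : 2 * m ≠ 0)]
        rw [hsum0, hSlast, add_zero]
        have h1 : ∫ ω, W 0 ω ^ (2 * m) ∂P ≤ β ^ (2 * m) := by
          calc ∫ ω, W 0 ω ^ (2 * m) ∂P ≤ |∫ ω, W 0 ω ^ (2 * m) ∂P| := le_abs_self _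
            _ ≤ ∫ ω, |W 0 ω ^ (2 * m)| ∂P := abs_integral_le _
            _ = ∫ ω, |W 0 ω| ^ (2 * m) ∂P := by simp_rw [abs_pow]
            _ ≤ β ^ (2 * m) := hmom 0 (2 * m) (by omega)
        refine h1.trans ?_
        have : β ^ (2 * m) = (β ^ 2) ^ m := by rw [← pow_mul]
        rw [this]
        push_cast
        rw [mul_one]
        refine pow_le_pow_left₀ (by positivity) ?_ m
        nlinarith [one_le_pow₀ (by norm_num : (1:ℝ) ≤ 4) (n := k), sq_nonneg β]
      · -- n ≥ 1
        have hN1 : (1:ℝ) ≤ (n:ℝ) := by exact_mod_cast hn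
        have ha1 : (1:ℝ) ≤ 4 ^ k := one_le_pow₀ (by norm_num)
        have hcn1 : (1:ℝ) ≤ 4 ^ k * (n:ℝ) := by nlinarith
        set s : ℝ := Real.sqrt (4 ^ k * (n:ℝ)) with hsdef
        have hs1 : 1 ≤ s := by
          rw [hsdef, show (1:ℝ) = Real.sqrt 1 by simp]
          exact Real.sqrt_le_sqrt hcn1
        have hs2 : s ^ 2 = 4 ^ k * (n:ℝ) := Real.sq_sqrt (by positivity)
        set A : ℝ := s * β with hAdef
        have hA0 : 0 ≤ A := by positivity
        have hA2k : A ^ (2 * k) = (4 ^ k * β ^ 2 * (n:ℝ)) ^ k := by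
          rw [hAdef, mul_pow, pow_mul s, hs2]
          rw [show (4 ^ k * β ^ 2 * (n:ℝ)) = (4 ^ k * (n:ℝ)) * (β ^ 2) by ring,
            mul_pow, mul_pow, ← pow_mul β 2 k]
          ring
        have hintabs : Integrable (fun ω => |S ω| ^ (2 * k)) P := by
          simpa [abs_pow] using (IH.1 (2 * k) le_rfl).abs
        have hlyap : ∀ a, a ≤ 2 * k → ∫ ω, |S ω| ^ a ∂P ≤ A ^ a := by
          refine lyapunov hSmeas (by omega) hintabs hA0 ?_
          rw [hA2k]
          calc ∫ ω, |S ω| ^ (2 * k) ∂P = ∫ ω, S ω ^ (2 * k) ∂P := by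
                simp_rw [abs_pow_even]
            _ ≤ (4 ^ k * β ^ 2 * (n:ℝ)) ^ k := IH.2 k le_rfl
        set K : ℝ := (4 ^ k * (n:ℝ)) ^ m' * β ^ (2 * m) with hKdef
        have hK0 : 0 ≤ K := by positivity
        have hterm : ∀ j ∈ Finset.range (2 * m' + 1),
            (∫ ω, S ω ^ j ∂P) * (∫ ω, W n ω ^ (2 * m - j) ∂P)
              * (((2 * m).choose j : ℕ) : ℝ)
            ≤ (((2 * m).choose j : ℕ) : ℝ) * K := by
          intro j hj
          have hj' : j ≤ 2 * m' := by have := Finset.mem_range.mp hj; omega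
          have h1 : |∫ ω, S ω ^ j ∂P| ≤ A ^ j := by
            calc |∫ ω, S ω ^ j ∂P| ≤ ∫ ω, |S ω ^ j| ∂P := abs_integral_le _
              _ = ∫ ω, |S ω| ^ j ∂P := by simp_rw [abs_pow]
              _ ≤ A ^ j := hlyap j (by omega)
          have h2 : |∫ ω, W n ω ^ (2 * m - j) ∂P| ≤ β ^ (2 * m - j) := by
            calc |∫ ω, W n ω ^ (2 * m - j) ∂P| ≤ ∫ ω, |W n ω ^ (2 * m - j)| ∂P :=
                  abs_integral_le _
              _ = ∫ ω, |W n ω| ^ (2 * m - j) ∂P := by simp_rw [abs_pow]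
              _ ≤ β ^ (2 * m - j) := hmom n _ (by omega)
          have h3 : A ^ j * β ^ (2 * m - j) ≤ K := by
            rw [hAdef, mul_pow, hKdef]
            have hsj : s ^ j ≤ (4 ^ k * (n:ℝ)) ^ m' := by
              calc s ^ j ≤ s ^ (2 * m') := pow_le_pow_right₀ hs1 hj'
                _ = (s ^ 2) ^ m' := by rw [← pow_mul]
                _ = (4 ^ k * (n:ℝ)) ^ m' := by rw [hs2]
            have hβj : β ^ j * β ^ (2 * m - j) = β ^ (2 * m) := by
              rw [← pow_add]
              congr 1
              omega
            calc s ^ j * β ^ j * β ^ (2 * m - j) = s ^ j * (β ^ j * β ^ (2 * m - j)) := by ring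
              _ = s ^ j * β ^ (2 * m) := by rw [hβj]
              _ ≤ (4 ^ k * (n:ℝ)) ^ m' * β ^ (2 * m) :=
                  mul_le_mul_of_nonneg_right hsj (by positivity)
          calc (∫ ω, S ω ^ j ∂P) * (∫ ω, W n ω ^ (2 * m - j) ∂P)
                * (((2 * m).choose j : ℕ) : ℝ)
              ≤ |(∫ ω, S ω ^ j ∂P) * (∫ ω, W n ω ^ (2 * m - j) ∂P)|
                * (((2 * m).choose j : ℕ) : ℝ) := by
                have : (0:ℝ) ≤ (((2 * m).choose j : ℕ) : ℝ) := by positivity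
                exact mul_le_mul_of_nonneg_right (le_abs_self _) this
            _ = |∫ ω, S ω ^ j ∂P| * |∫ ω, W n ω ^ (2 * m - j) ∂P|
                * (((2 * m).choose j : ℕ) : ℝ) := by rw [abs_mul]
            _ ≤ A ^ j * β ^ (2 * m - j) * (((2 * m).choose j : ℕ) : ℝ) := by
                have : (0:ℝ) ≤ (((2 * m).choose j : ℕ) : ℝ) := by positivity
                refine mul_le_mul_of_nonneg_right ?_ this
                exact mul_le_mul h1 h2 (abs_nonneg _) (by positivity)
            _ ≤ K * (((2 * m).choose j : ℕ) : ℝ) := mul_le_mul_of_nonneg_right h3 (by positivity)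
            _ = (((2 * m).choose j : ℕ) : ℝ) * K := by ring
        have hsum : ∑ j ∈ Finset.range (2 * m' + 1),
            (∫ ω, S ω ^ j ∂P) * (∫ ω, W n ω ^ (2 * m - j) ∂P)
              * (((2 * m).choose j : ℕ) : ℝ)
            ≤ (2:ℝ) ^ (2 * m) * K := by
          calc ∑ j ∈ Finset.range (2 * m' + 1), (∫ ω, S ω ^ j ∂P)
                * (∫ ω, W n ω ^ (2 * m - j) ∂P) * (((2 * m).choose j : ℕ) : ℝ)
              ≤ ∑ j ∈ Finset.range (2 * m' + 1), (((2 * m).choose j : ℕ) : ℝ) * K :=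
                Finset.sum_le_sum hterm
            _ = ((∑ j ∈ Finset.range (2 * m' + 1), ((2 * m).choose j) : ℕ) : ℝ) * K := by
                rw [← Finset.sum_mul]
                push_cast
                ring
            _ ≤ (2:ℝ) ^ (2 * m) * K := by
                refine mul_le_mul_of_nonneg_right ?_ hK0
                have hnat : (∑ j ∈ Finset.range (2 * m' + 1), ((2 * m).choose j)) ≤ 2 ^ (2 * m) :=
                  le_trans (Finset.sum_le_sum_of_subset (by
                    intro x hx
                    simp only [Finset.mem_range] at *
                    omega)) (le_of_eq (Nat.sum_range_choose (2 * m)))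
                exact_mod_cast hnat
        have hIHm : ∫ ω, S ω ^ (2 * m) ∂P ≤ (4 ^ k * β ^ 2 * (n:ℝ)) ^ m := IH.2 m hm
        push_cast
        set Q : ℝ := (4 ^ k) ^ m * β ^ (2 * m) with hQdef
        have hQ0 : 0 ≤ Q := by positivity
        have e3 : ∀ x : ℝ, (4 ^ k * β ^ 2 * x) ^ m = Q * x ^ m := by
          intro x
          rw [hQdef, mul_pow, mul_pow, ← pow_mul β 2 m]
        have e1 : (2:ℝ) ^ (2 * m) = 4 ^ m := by rw [pow_mul]; norm_num
        have h5 : (4:ℝ) ^ m * (4 ^ k) ^ m' ≤ (4 ^ k) ^ m := by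
          rw [hmdef, pow_succ]
          have h4m : (4:ℝ) ^ m ≤ 4 ^ k := pow_le_pow_right₀ (by norm_num) hm
          calc (4:ℝ) ^ m * (4 ^ k) ^ m' = (4 ^ k) ^ m' * 4 ^ m := by ring
            _ ≤ (4 ^ k) ^ m' * 4 ^ k := mul_le_mul_of_nonneg_left h4m (by positivity)
        have step1 : (2:ℝ) ^ (2 * m) * K ≤ Q * (n:ℝ) ^ m' := by
          rw [hKdef, e1, mul_pow, hQdef]
          calc (4:ℝ) ^ m * ((4 ^ k) ^ m' * (n:ℝ) ^ m' * β ^ (2 * m))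
              = ((4:ℝ) ^ m * (4 ^ k) ^ m') * ((n:ℝ) ^ m' * β ^ (2 * m)) := by ring
            _ ≤ (4 ^ k) ^ m * ((n:ℝ) ^ m' * β ^ (2 * m)) :=
                mul_le_mul_of_nonneg_right h5 (by positivity)
            _ = (4 ^ k) ^ m * β ^ (2 * m) * (n:ℝ) ^ m' := by ring
        have h6 : (n:ℝ) ^ m' + (n:ℝ) ^ m ≤ ((n:ℝ) + 1) ^ m := by
          have hsucc : ((n:ℝ) + 1) ^ m = ((n:ℝ) + 1) ^ m' * ((n:ℝ) + 1) := by
            rw [hmdef, pow_succ]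
          rw [hsucc]
          have hp : (n:ℝ) ^ m' ≤ ((n:ℝ) + 1) ^ m' :=
            pow_le_pow_left₀ (by positivity) (by linarith) m'
          have hnm : (n:ℝ) ^ m = (n:ℝ) ^ m' * (n:ℝ) := by rw [hmdef, pow_succ]
          nlinarith [pow_nonneg (by positivity : (0:ℝ) ≤ (n:ℝ)) m']
        have hfinal : (2:ℝ) ^ (2 * m) * K + (4 ^ k * β ^ 2 * (n:ℝ)) ^ m
            ≤ (4 ^ k * β ^ 2 * ((n:ℝ) + 1)) ^ m := by
          calc (2:ℝ) ^ (2 * m) * K + (4 ^ k * β ^ 2 * (n:ℝ)) ^ m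
              ≤ Q * (n:ℝ) ^ m' + Q * (n:ℝ) ^ m := add_le_add step1 (le_of_eq (e3 (n:ℝ)))
            _ = Q * ((n:ℝ) ^ m' + (n:ℝ) ^ m) := by ring
            _ ≤ Q * ((n:ℝ) + 1) ^ m := mul_le_mul_of_nonneg_left h6 hQ0
            _ = (4 ^ k * β ^ 2 * ((n:ℝ) + 1)) ^ m := (e3 ((n:ℝ) + 1)).symm
        calc (∑ j ∈ Finset.range (2 * m' + 1), (∫ ω, S ω ^ j ∂P)
              * (∫ ω, W n ω ^ (2 * m - j) ∂P) * (((2 * m).choose j : ℕ) : ℝ))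
              + ∫ ω, S ω ^ (2 * m) ∂P
            ≤ (2:ℝ) ^ (2 * m) * K + (4 ^ k * β ^ 2 * (n:ℝ)) ^ m := add_le_add hsum hIHm
          _ ≤ (4 ^ k * β ^ 2 * ((n:ℝ) + 1)) ^ m := hfinal

end Aux

section PerIndex

lemma Model.transfer_integral (M : Model) (i : ℕ) {φ : ℝ × (ℕ → ℝ) → ℝ}
    (hφ : Measurable φ) :
    ∫ ω, φ (M.eps i ω, fun j => M.Xc i j ω) ∂M.P
      = ∫ ω, φ (M.eps 0 ω, fun j => M.Xc 0 j ω) ∂M.P := by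
  have hGi : Measurable (fun ω => ((M.eps i ω : ℝ), fun j => M.Xc i j ω)) :=
    (M.meas_eps i).prodMk (measurable_pi_lambda _ fun j => M.meas_Xc i j)
  have hG0 : Measurable (fun ω => ((M.eps 0 ω : ℝ), fun j => M.Xc 0 j ω)) :=
    (M.meas_eps 0).prodMk (measurable_pi_lambda _ fun j => M.meas_Xc 0 j)
  have h1 := integral_map (μ := M.P) (f := φ) hGi.aemeasurable hφ.aestronglyMeasurable
  have h2 := integral_map (μ := M.P) (f := φ) hG0.aemeasurable hφ.aestronglyMeasurable
  have h3 : ∫ y, φ y ∂(MeasureTheory.Measure.map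
        (fun ω => ((M.eps i ω : ℝ), fun j => M.Xc i j ω)) M.P)
      = ∫ y, φ y ∂(MeasureTheory.Measure.map
        (fun ω => ((M.eps 0 ω : ℝ), fun j => M.Xc 0 j ω)) M.P) := by
    rw [M.iid_ident i]
  exact h1.symm.trans (h3.trans h2)

lemma Model.transfer_integrable (M : Model) (i : ℕ) {φ : ℝ × (ℕ → ℝ) → ℝ}
    (hφ : Measurable φ)
    (h : Integrable (fun ω => φ (M.eps 0 ω, fun j => M.Xc 0 j ω)) M.P) :
    Integrable (fun ω => φ (M.eps i ω, fun j => M.Xc i j ω)) M.P := by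
  have hGi : Measurable (fun ω => ((M.eps i ω : ℝ), fun j => M.Xc i j ω)) :=
    (M.meas_eps i).prodMk (measurable_pi_lambda _ fun j => M.meas_Xc i j)
  have hG0 : Measurable (fun ω => ((M.eps 0 ω : ℝ), fun j => M.Xc 0 j ω)) :=
    (M.meas_eps 0).prodMk (measurable_pi_lambda _ fun j => M.meas_Xc 0 j)
  have h1 : Integrable φ (MeasureTheory.Measure.map
      (fun ω => ((M.eps 0 ω : ℝ), fun j => M.Xc 0 j ω)) M.P) :=
    (integrable_map_measure hφ.aestronglyMeasurable hG0.aemeasurable).mpr h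
  have h2 : Integrable φ (MeasureTheory.Measure.map
      (fun ω => ((M.eps i ω : ℝ), fun j => M.Xc i j ω)) M.P) := by
    rw [M.iid_ident i]; exact h1
  exact (integrable_map_measure hφ.aestronglyMeasurable hGi.aemeasurable).mp h2

lemma perj (M : Model) {η : ℝ} (hη : 1 ≤ η) {k : ℕ} (hk : 1 ≤ k)
    (hmomX : M.momX (4 * k) η) {n j : ℕ} (hn : 1 ≤ n) (hj : 1 ≤ j)
    (hlamn : 2 / (n : ℝ) ≤ M.lam j) :
    (M.P {ω | 1 / 2 < |M.lam j / M.lamhat n j ω - 1| ∨ M.lamhat n j ω < 1 / (n : ℝ)}).toReal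
      ≤ 2 * 9 ^ k * 4 ^ (k * k) * 4 ^ k * η / (n : ℝ) ^ k := by
  have hlam_pos : 0 < M.lam j := M.lam_pos j hj
  have hnR : (1:ℝ) ≤ (n:ℝ) := by exact_mod_cast hn
  have hnR0 : (0:ℝ) < (n:ℝ) := by linarith
  set W : ℕ → M.Ω → ℝ := fun i ω => (M.Xc i j ω) ^ 2 * (M.lam j)⁻¹ - 1 with hWdef
  have hWmeas : ∀ i, Measurable (W i) := fun i =>
    (((M.meas_Xc i j).pow_const 2).mul_const _).sub measurable_const
  set ψ : ℝ × (ℕ → ℝ) → ℝ := fun p => (p.2 j) ^ 2 * (M.lam j)⁻¹ - 1 with hψdef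
  have hψmeas : Measurable ψ :=
    ((((measurable_pi_apply j).comp measurable_snd).pow_const 2).mul_const _).sub
      measurable_const
  have hWindep : iIndepFun W M.P := by
    have h := M.iid_indep.comp (fun _ => ψ) (fun _ => hψmeas)
    exact h
  set Z : M.Ω → ℝ := fun ω => M.Xc 0 j ω / Real.sqrt (M.lam j) with hZdef
  have hZW : ∀ ω, W 0 ω = Z ω ^ 2 - 1 := by
    intro ω
    show (M.Xc 0 j ω) ^ 2 * (M.lam j)⁻¹ - 1
      = (M.Xc 0 j ω / Real.sqrt (M.lam j)) ^ 2 - 1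
    rw [div_pow, Real.sq_sqrt hlam_pos.le, div_eq_mul_inv]
  obtain ⟨hZint, hZmom⟩ := hmomX j hj
  have hZint' : Integrable (fun ω => |Z ω| ^ (4 * k)) M.P := hZint
  have hZmom' : ∫ ω, |Z ω| ^ (4 * k) ∂M.P ≤ η := hZmom
  set B : ℝ := 2 * 4 ^ k * η with hBdef
  have h4k1 : (1:ℝ) ≤ 4 ^ k := one_le_pow₀ (by norm_num)
  have hB1 : (1:ℝ) ≤ B := by rw [hBdef]; nlinarith
  have hz4 : ∀ x : ℝ, (x ^ 2) ^ (2 * k) = |x| ^ (4 * k) := fun x => by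
    rw [show (4 * k) = 2 * (2 * k) by ring, abs_pow_even, pow_mul]
    ring
  have hW0abs : ∀ ω, |W 0 ω| ^ (2 * k) ≤ 4 ^ k * (|Z ω| ^ (4 * k) + 1) := by
    intro ω
    have h1 : |W 0 ω| ≤ Z ω ^ 2 + 1 := by
      rw [hZW ω]
      calc |Z ω ^ 2 - 1| ≤ |Z ω ^ 2| + |(1:ℝ)| := abs_sub _ _
        _ = Z ω ^ 2 + 1 := by rw [abs_of_nonneg (sq_nonneg _), abs_one]
    calc |W 0 ω| ^ (2 * k) ≤ (Z ω ^ 2 + 1) ^ (2 * k) :=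
          pow_le_pow_left₀ (abs_nonneg _) h1 _
      _ ≤ 2 ^ (2 * k) * ((Z ω ^ 2) ^ (2 * k) + 1 ^ (2 * k)) :=
          add_pow_le2 (sq_nonneg _) zero_le_one _
      _ = 4 ^ k * (|Z ω| ^ (4 * k) + 1) := by
          rw [show (2:ℝ) ^ (2 * k) = 4 ^ k by rw [pow_mul]; norm_num, one_pow, hz4]
  have hdomint : Integrable (fun ω => 4 ^ k * (|Z ω| ^ (4 * k) + 1)) M.P :=
    (hZint'.add (integrable_const 1)).const_mul _
  have hW0int : Integrable (fun ω => |W 0 ω| ^ (2 * k)) M.P := by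
    refine Integrable.mono' hdomint
      (((hWmeas 0).abs.pow_const _).aestronglyMeasurable) ?_
    filter_upwards with ω
    rw [Real.norm_eq_abs, abs_of_nonneg (by positivity)]
    exact hW0abs ω
  have hW0mom2k : ∫ ω, |W 0 ω| ^ (2 * k) ∂M.P ≤ B := by
    have hb := integral_mono hW0int hdomint hW0abs
    have hval : ∫ ω, 4 ^ k * (|Z ω| ^ (4 * k) + 1) ∂M.P
        = 4 ^ k * ((∫ ω, |Z ω| ^ (4 * k) ∂M.P) + 1) := by
      rw [integral_const_mul, integral_add hZint' (integrable_const 1), integral_const,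
        probReal_univ, smul_eq_mul, one_mul]
    rw [hval] at hb
    refine hb.trans ?_
    rw [hBdef]
    nlinarith
  set β : ℝ := B ^ (((2 * k : ℕ) : ℝ))⁻¹ with hβdef
  have hβ1 : 1 ≤ β := by
    rw [hβdef]
    calc (1:ℝ) = 1 ^ (((2 * k : ℕ) : ℝ))⁻¹ := (Real.one_rpow _).symm
      _ ≤ B ^ (((2 * k : ℕ) : ℝ))⁻¹ := Real.rpow_le_rpow zero_le_one hB1 (by positivity)
  have hβ2k : β ^ (2 * k) = B := by
    rw [hβdef]
    exact Real.rpow_inv_natCast_pow (by linarith) (by omega)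
  have hW0lyap : ∀ a, a ≤ 2 * k → ∫ ω, |W 0 ω| ^ a ∂M.P ≤ β ^ a :=
    lyapunov (hWmeas 0) (by omega) hW0int (by positivity) (by rw [hβ2k]; exact hW0mom2k)
  have hW0inta : ∀ a, a ≤ 2 * k → Integrable (fun ω => (W 0 ω) ^ a) M.P := by
    intro a ha
    have h1 : Integrable (fun ω => |W 0 ω| ^ a) M.P :=
      integrable_abs_pow_of_le (hWmeas 0) ha hW0int
    refine h1.mono' (((hWmeas 0).pow_const a).aestronglyMeasurable) ?_
    filter_upwards with ω
    simp [Real.norm_eq_abs, abs_pow]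
  have hWinta : ∀ i a, a ≤ 2 * k → Integrable (fun ω => (W i ω) ^ a) M.P := by
    intro i a ha
    exact M.transfer_integrable i (φ := fun p => (ψ p) ^ a) (hψmeas.pow_const a)
      (hW0inta a ha)
  have hWmom : ∀ i a, a ≤ 2 * k → ∫ ω, |W i ω| ^ a ∂M.P ≤ β ^ a := by
    intro i a ha
    have heq := M.transfer_integral i (φ := fun p => |ψ p| ^ a) (hψmeas.abs.pow_const a)
    calc ∫ ω, |W i ω| ^ a ∂M.P = ∫ ω, |W 0 ω| ^ a ∂M.P := heq
      _ ≤ β ^ a := hW0lyap a ha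
  have hWcent : ∀ i, ∫ ω, W i ω ∂M.P = 0 := by
    intro i
    have heq := M.transfer_integral i (φ := ψ) hψmeas
    have h2 : Integrable (fun ω => W 0 ω) M.P := by
      simpa using hW0inta 1 (by omega)
    have h3 : (fun ω => W 0 ω + 1) = fun ω => (M.Xc 0 j ω) ^ 2 * (M.lam j)⁻¹ := by
      funext ω
      show ((M.Xc 0 j ω) ^ 2 * (M.lam j)⁻¹ - 1) + 1 = _
      ring
    have hXsqint : Integrable (fun ω => (M.Xc 0 j ω) ^ 2 * (M.lam j)⁻¹) M.P := by
      rw [← h3]; exact h2.add (integrable_const 1)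
    have h0 : ∫ ω, W 0 ω ∂M.P = 0 := by
      have h4 : ∫ ω, W 0 ω ∂M.P
          = (∫ ω, (M.Xc 0 j ω) ^ 2 * (M.lam j)⁻¹ ∂M.P) - 1 := by
        rw [show (fun ω => W 0 ω) = fun ω => (M.Xc 0 j ω) ^ 2 * (M.lam j)⁻¹ - 1 from rfl,
          integral_sub hXsqint (integrable_const 1), integral_const, probReal_univ,
          smul_eq_mul, one_mul]
      rw [h4, integral_mul_const, M.Xc_var j hj, mul_inv_cancel₀ (ne_of_gt hlam_pos)]
      ring
    exact heq.trans h0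
  obtain ⟨hSint, hSmom⟩ := moment_bound (P := M.P) hk hβ1 hWmeas hWindep hWinta hWmom hWcent n
  set S : M.Ω → ℝ := fun ω => ∑ i ∈ Finset.range n, W i ω with hSdef
  set g : M.Ω → ℝ := fun ω => (3 / (n:ℝ)) ^ (2 * k) * (S ω) ^ (2 * k) with hgdef
  have hgint : Integrable g M.P := (hSint (2 * k) le_rfl).const_mul _
  have hgnn : 0 ≤ᵐ[M.P] g := Filter.Eventually.of_forall fun ω => by
    rw [hgdef]
    exact mul_nonneg (by positivity) (by rw [← abs_pow_even]; positivity)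
  have hsub : {ω | 1 / 2 < |M.lam j / M.lamhat n j ω - 1| ∨ M.lamhat n j ω < 1 / (n : ℝ)}
      ⊆ {ω | (1:ℝ) ≤ g ω} := by
    intro ω hω
    simp only [Set.mem_setOf_eq] at hω ⊢
    have hL0 : 0 ≤ M.lamhat n j ω := by
      rw [Model.lamhat]
      positivity
    have hSL : S ω = (n:ℝ) * (M.lamhat n j ω / M.lam j - 1) := by
      show ∑ i ∈ Finset.range n, ((M.Xc i j ω) ^ 2 * (M.lam j)⁻¹ - 1)
        = (n:ℝ) * (M.lamhat n j ω / M.lam j - 1)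
      rw [Finset.sum_sub_distrib, ← Finset.sum_mul, Finset.sum_const, Finset.card_range,
        nsmul_eq_mul, mul_one, Model.lamhat]
      field_simp
    have habs : 1 / 3 ≤ |M.lamhat n j ω / M.lam j - 1| := by
      by_cases hLn : M.lamhat n j ω < 1 / (n:ℝ)
      · have h1 : M.lamhat n j ω / M.lam j < 1 / 2 := by
          rw [div_lt_iff₀ hlam_pos]
          have h2 : (1:ℝ) / (n:ℝ) ≤ M.lam j / 2 := by
            rw [div_le_div_iff₀ hnR0 (by norm_num)]
            rw [div_le_iff₀ hnR0] at hlamn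
            linarith
          linarith
        have h3 := neg_le_abs (M.lamhat n j ω / M.lam j - 1)
        linarith
      · rcases hω with h | h
        · by_contra hc
          push_neg at hc
          obtain ⟨h1, h2⟩ := abs_lt.mp hc
          have hL0' : 0 < M.lamhat n j ω := by
            have : (0:ℝ) < 1 / (n:ℝ) := by positivity
            linarith [not_lt.mp hLn]
          have hA : 2 / 3 * M.lam j < M.lamhat n j ω :=
            (lt_div_iff₀ hlam_pos).mp (by linarith)
          have hB : M.lamhat n j ω < 4 / 3 * M.lam j := by
            have := (div_lt_iff₀ hlam_pos).mp (show M.lamhat n j ω / M.lam j < 4 / 3 by linarith)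
            linarith
          have hC : M.lam j / M.lamhat n j ω ≤ 3 / 2 := by
            rw [div_le_iff₀ hL0']
            linarith
          have hD : 1 / 2 ≤ M.lam j / M.lamhat n j ω := by
            rw [le_div_iff₀ hL0']
            linarith
          have : |M.lam j / M.lamhat n j ω - 1| ≤ 1 / 2 :=
            abs_le.mpr ⟨by linarith, by linarith⟩
          linarith
        · exact absurd h hLn
    have hSabs : (n:ℝ) / 3 ≤ |S ω| := by
      rw [hSL, abs_mul, abs_of_pos hnR0]
      calc (n:ℝ) / 3 = (n:ℝ) * (1 / 3) := by ring
        _ ≤ (n:ℝ) * |M.lamhat n j ω / M.lam j - 1| :=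
            mul_le_mul_of_nonneg_left habs (le_of_lt hnR0)
    show (1:ℝ) ≤ (3 / (n:ℝ)) ^ (2 * k) * (S ω) ^ (2 * k)
    rw [← abs_pow_even (S ω) k, ← mul_pow]
    have h1 : (1:ℝ) ≤ 3 / (n:ℝ) * |S ω| := by
      rw [div_mul_eq_mul_div, le_div_iff₀ hnR0, one_mul]
      linarith
    calc (1:ℝ) = 1 ^ (2 * k) := (one_pow _).symm
      _ ≤ (3 / (n:ℝ) * |S ω|) ^ (2 * k) := pow_le_pow_left₀ zero_le_one h1 _
  have hmark := mul_meas_ge_le_integral_of_nonneg hgnn hgint 1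
  rw [one_mul] at hmark
  have hPle : (M.P {ω | 1 / 2 < |M.lam j / M.lamhat n j ω - 1|
      ∨ M.lamhat n j ω < 1 / (n : ℝ)}).toReal ≤ ∫ ω, g ω ∂M.P :=
    le_trans (ENNReal.toReal_mono (measure_ne_top _ _) (measure_mono hsub)) hmark
  have hgval : ∫ ω, g ω ∂M.P = (3 / (n:ℝ)) ^ (2 * k) * ∫ ω, S ω ^ (2 * k) ∂M.P :=
    integral_const_mul _ _
  have hSbound : ∫ ω, S ω ^ (2 * k) ∂M.P ≤ (4 ^ k * β ^ 2 * (n:ℝ)) ^ k := hSmom k le_rfl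
  refine hPle.trans ?_
  rw [hgval]
  have h2 : (3 / (n:ℝ)) ^ (2 * k) * ∫ ω, S ω ^ (2 * k) ∂M.P
      ≤ (3 / (n:ℝ)) ^ (2 * k) * (4 ^ k * β ^ 2 * (n:ℝ)) ^ k :=
    mul_le_mul_of_nonneg_left hSbound (by positivity)
  refine h2.trans (le_of_eq ?_)
  have hβB : (β ^ 2) ^ k = B := by rw [← pow_mul]; exact hβ2k
  have hnk0 : ((n:ℝ)) ^ k ≠ 0 := by positivity
  rw [div_pow, mul_pow, mul_pow, hβB,
    show ((3:ℝ)) ^ (2 * k) = 9 ^ k by rw [pow_mul]; norm_num,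
    show (((4:ℝ)) ^ k) ^ k = 4 ^ (k * k) by rw [← pow_mul],
    show ((n:ℝ)) ^ (2 * k) = (n:ℝ) ^ k * (n:ℝ) ^ k by rw [two_mul, pow_add],
    hBdef]
  field_simp

end PerIndex


/-- Lemma A.5, bound (A.12): uniform control of the estimated eigenvalues up to `M_n`. -/
theorem statement16 :
    ∀ k : ℕ, 1 ≤ k → ∃ C : ℝ, 0 < C ∧
      ∀ (M : Model) (η : ℝ) (Ms : ℕ → ℕ), 1 ≤ η → M.momX (4 * k) η →
        (∀ n : ℕ, 1 ≤ n → ∀ j : ℕ, 1 ≤ j → j ≤ Ms n → 2 / (n : ℝ) ≤ M.lam j) →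
        ∀ n : ℕ, 1 ≤ n →
          (M.P {ω | ∃ j : ℕ, 1 ≤ j ∧ j ≤ Ms n ∧
              (1 / 2 < |M.lam j / M.lamhat n j ω - 1| ∨ M.lamhat n j ω < 1 / (n : ℝ))}).toReal
            ≤ C * η * (Ms n : ℝ) / (n : ℝ) ^ k := by
  intro k hk
  refine ⟨2 * 9 ^ k * 4 ^ (k * k) * 4 ^ k, by positivity, ?_⟩
  intro M η Ms hη hmomX hlam n hn
  classical
  have hset : {ω | ∃ j : ℕ, 1 ≤ j ∧ j ≤ Ms n ∧
        (1 / 2 < |M.lam j / M.lamhat n j ω - 1| ∨ M.lamhat n j ω < 1 / (n : ℝ))}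
      = ⋃ j ∈ Finset.Icc 1 (Ms n),
          {ω | 1 / 2 < |M.lam j / M.lamhat n j ω - 1| ∨ M.lamhat n j ω < 1 / (n : ℝ)} := by
    ext ω
    simp only [Set.mem_setOf_eq, Set.mem_iUnion, Finset.mem_Icc]
    constructor
    · rintro ⟨j, h1, h2, h3⟩; exact ⟨j, ⟨h1, h2⟩, h3⟩
    · rintro ⟨j, ⟨h1, h2⟩, h3⟩; exact ⟨j, h1, h2, h3⟩
  rw [hset]
  have hub := measure_biUnion_finset_le (μ := M.P) (Finset.Icc 1 (Ms n))
    (fun j => {ω | 1 / 2 < |M.lam j / M.lamhat n j ω - 1| ∨ M.lamhat n j ω < 1 / (n : ℝ)})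
  have h1 : (M.P (⋃ j ∈ Finset.Icc 1 (Ms n),
        {ω | 1 / 2 < |M.lam j / M.lamhat n j ω - 1| ∨ M.lamhat n j ω < 1 / (n : ℝ)})).toReal
      ≤ ∑ j ∈ Finset.Icc 1 (Ms n),
          (M.P {ω | 1 / 2 < |M.lam j / M.lamhat n j ω - 1|
            ∨ M.lamhat n j ω < 1 / (n : ℝ)}).toReal := by
    refine le_trans (ENNReal.toReal_mono ?_ hub) ?_
    · exact (ENNReal.sum_lt_top.mpr fun j _ => measure_lt_top _ _).ne
    · rw [ENNReal.toReal_sum (fun j _ => measure_ne_top _ _)]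
  refine h1.trans ?_
  have h2 : ∀ j ∈ Finset.Icc 1 (Ms n),
      (M.P {ω | 1 / 2 < |M.lam j / M.lamhat n j ω - 1|
        ∨ M.lamhat n j ω < 1 / (n : ℝ)}).toReal
      ≤ 2 * 9 ^ k * 4 ^ (k * k) * 4 ^ k * η / (n : ℝ) ^ k := by
    intro j hj
    obtain ⟨hj1, hj2⟩ := Finset.mem_Icc.mp hj
    exact perj M hη hk hmomX hn hj1 (hlam n hn j hj1 hj2)
  calc ∑ j ∈ Finset.Icc 1 (Ms n),
        (M.P {ω | 1 / 2 < |M.lam j / M.lamhat n j ω - 1|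
          ∨ M.lamhat n j ω < 1 / (n : ℝ)}).toReal
      ≤ ∑ _j ∈ Finset.Icc 1 (Ms n),
          (2 * 9 ^ k * 4 ^ (k * k) * 4 ^ k * η / (n : ℝ) ^ k) := Finset.sum_le_sum h2
    _ = (Ms n : ℝ) * (2 * 9 ^ k * 4 ^ (k * k) * 4 ^ k * η / (n : ℝ) ^ k) := by
        rw [Finset.sum_const, nsmul_eq_mul, Nat.card_Icc]
        simp
    _ = 2 * 9 ^ k * 4 ^ (k * k) * 4 ^ k * η * (Ms n : ℝ) / (n : ℝ) ^ k := by ring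


end CircularFLM
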